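/- arXiv:math/0209335 — 2 statements merged into one kernel-verified Lean document; each statement's English description precedes it below -/
import Mathlib

section
/- Let n ≥ 1 and a, c ∈ ℝ. (i) If f : I → ℝ is twice differentiable on an open interval I and satisfies 4·f'' + (n−2a)·f'² = 0 on I, then e^{−a f(t)}·( −n·f''(t) + (n(2a−n−1)/4)·f'(t)² ) = −(n/4)·e^{−a f(t)}·f'(t)² ≤ 0 for all t ∈ I. (ii) If b := n − 2a ≠ 0 and f(t) = (4/b)·log(1 + bct/4) on I = {t : 1 + bct/4 > 0}, then this quantity equals −(n c²/4)·((4 + bct)/4)^{−2n/b} for all t ∈ I; if b = 0 and f(t) = ct, it equals −(n c²/4)·e^{−nct/2}. -/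
lemma aux_deriv (b c : ℝ) (hb : b ≠ 0) (t : ℝ) (ht : 0 < 1 + b * c * t / 4) :
    deriv (fun s => (4 / b) * Real.log (1 + b * c * s / 4)) t
      = c / (1 + b * c * t / 4) := by
  have h1 : HasDerivAt (fun s : ℝ => 1 + b * c * s / 4) (b * c / 4) t := by
    simpa using (((hasDerivAt_id t).const_mul (b * c)).div_const 4).const_add 1
  have h2 : HasDerivAt (fun s => (4 / b) * Real.log (1 + b * c * s / 4))
      ((4 / b) * (b * c / 4 / (1 + b * c * t / 4))) t :=
    (h1.log ht.ne').const_mul (4 / b)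
  rw [h2.deriv]
  rw [div_mul_div_comm, div_eq_div_iff (by positivity) (by positivity)]
  ring

lemma aux_deriv2 (b c : ℝ) (hb : b ≠ 0) (t : ℝ) (ht : 0 < 1 + b * c * t / 4) :
    deriv (deriv (fun s => (4 / b) * Real.log (1 + b * c * s / 4))) t
      = -(b * c ^ 2 / 4) / (1 + b * c * t / 4) ^ 2 := by
  have hO : IsOpen {s : ℝ | 0 < 1 + b * c * s / 4} :=
    isOpen_lt continuous_const (by continuity)
  have hev : deriv (fun s => (4 / b) * Real.log (1 + b * c * s / 4))
      =ᶠ[nhds t] fun s => c / (1 + b * c * s / 4) :=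
    (hO.eventually_mem ht).mono fun s hs => aux_deriv b c hb s hs
  rw [hev.deriv_eq]
  have h1 : HasDerivAt (fun s : ℝ => 1 + b * c * s / 4) (b * c / 4) t := by
    simpa using (((hasDerivAt_id t).const_mul (b * c)).div_const 4).const_add 1
  have h2 : HasDerivAt (fun s => c / (1 + b * c * s / 4))
      ((0 * (1 + b * c * t / 4) - c * (b * c / 4)) / (1 + b * c * t / 4) ^ 2) t :=
    (hasDerivAt_const t c).div h1 ht.ne'
  rw [h2.deriv]
  ring

/-- Scalar curvature computation of Lemma 5.3.  (i) Along any solution of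
`4 f'' + (n-2a) (f')² = 0` the quantity `e^{-af}(−n f'' + (n(2a−n−1)/4)(f')²)`
equals `−(n/4) e^{-af} (f')² ≤ 0`.  (ii) For the explicit solutions of Lemma 5.3
it equals `−(nc²/4)((4+bct)/4)^{−2n/b}` (case `b = n−2a ≠ 0`), respectively
`−(nc²/4) e^{−nct/2}` (case `b = 0`, `f t = ct`). -/
theorem stmt_4 (n a c : ℝ) (hn : 1 ≤ n) :
    (∀ (I : Set ℝ), IsOpen I → ∀ f f' f'' : ℝ → ℝ,
      (∀ t ∈ I, HasDerivAt f (f' t) t) →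
      (∀ t ∈ I, HasDerivAt f' (f'' t) t) →
      (∀ t ∈ I, 4 * f'' t + (n - 2 * a) * (f' t) ^ 2 = 0) →
      ∀ t ∈ I,
        Real.exp (-a * f t) * (-n * f'' t + (n * (2 * a - n - 1) / 4) * (f' t) ^ 2)
            = -(n / 4) * Real.exp (-a * f t) * (f' t) ^ 2 ∧
        Real.exp (-a * f t) * (-n * f'' t + (n * (2 * a - n - 1) / 4) * (f' t) ^ 2) ≤ 0)
    ∧
    (∀ hb : n - 2 * a ≠ 0,
      let b : ℝ := n - 2 * a
      let f : ℝ → ℝ := fun t => (4 / b) * Real.log (1 + b * c * t / 4)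
      ∀ t : ℝ, 1 + b * c * t / 4 > 0 →
        Real.exp (-a * f t) *
            (-n * deriv (deriv f) t + (n * (2 * a - n - 1) / 4) * (deriv f t) ^ 2)
          = -(n * c ^ 2 / 4) * ((4 + b * c * t) / 4) ^ (-(2 * n) / b))
    ∧
    (n - 2 * a = 0 →
      let f : ℝ → ℝ := fun t => c * t
      ∀ t : ℝ,
        Real.exp (-a * f t) *
            (-n * deriv (deriv f) t + (n * (2 * a - n - 1) / 4) * (deriv f t) ^ 2)
          = -(n * c ^ 2 / 4) * Real.exp (-(n * c * t) / 2)) := by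
  refine ⟨?_, ?_, ?_⟩
  · intro I _ f f' f'' _ _ hode t ht
    have he : f'' t = -((n - 2 * a) / 4) * (f' t) ^ 2 := by linarith [hode t ht]
    constructor
    · rw [he]; ring
    · rw [he, show Real.exp (-a * f t) * (-n * (-((n - 2 * a) / 4) * f' t ^ 2)
          + n * (2 * a - n - 1) / 4 * f' t ^ 2)
          = -(n / 4 * (Real.exp (-a * f t) * f' t ^ 2)) from by ring]
      have h1 : 0 ≤ n / 4 * (Real.exp (-a * f t) * f' t ^ 2) := by positivity
      linarith
  · intro hb b f t ht
    have hu : (0:ℝ) < 1 + b * c * t / 4 := ht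
    rw [show f = fun s => (4 / b) * Real.log (1 + b * c * s / 4) from rfl]
    rw [aux_deriv b c hb t hu, aux_deriv2 b c hb t hu]
    have hexp : Real.exp (-a * ((4 / b) * Real.log (1 + b * c * t / 4)))
        = (1 + b * c * t / 4) ^ (-4 * a / b) := by
      rw [Real.rpow_def_of_pos hu]; ring_nf
    have hU : (4 + b * c * t) / 4 = 1 + b * c * t / 4 := by ring
    rw [hexp, hU]
    have hsplit : (1 + b * c * t / 4) ^ (-(2 * n) / b)
        = (1 + b * c * t / 4) ^ (-4 * a / b) * ((1 + b * c * t / 4) ^ 2)⁻¹ := by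
      have : -(2 * n) / b = (-4 * a / b) + (-2 : ℝ) := by
        have hb' : b ≠ 0 := hb
        field_simp
        simp only [show b = n - 2 * a from rfl]
        ring
      rw [this, Real.rpow_add hu]
      congr 1
      rw [show ((-2:ℝ)) = -((2:ℕ):ℝ) from by norm_num,
        Real.rpow_neg hu.le, Real.rpow_natCast]
    rw [hsplit]
    have h2 : (1 + b * c * t / 4) ^ 2 ≠ 0 := by positivity
    field_simp
    simp only [show b = n - 2 * a from rfl]
    ring
  · intro h0 f t
    have hd1 : deriv f = fun _ => c := by
      funext s
      exact (((hasDerivAt_id s).const_mul c).deriv).trans (mul_one c)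
    rw [show f = fun s => c * s from rfl, hd1]
    simp only [deriv_const]
    have ha : a = n / 2 := by linarith
    subst ha
    rw [show -(n / 2) * (c * t) = -(n * c * t) / 2 from by ring]
    ring
end

section
/- Let m ∈ ℕ, a, λ_Q, λ_M ∈ ℝ, let I ⊆ ℝ be an open interval containing 0, let f : I → ℝ be continuously differentiable, and let h⁺, h⁻ : I → ℂ be differentiable functions satisfying h⁺' = −(m/2)·f'·h⁺ + i^{2m+3}·λ_Q·e^{(a/2) f}·h⁺ − i^{2m+3}·λ_M·e^{((a−1)/2) f}·h⁻ and h⁻' = i^{2m+3}·λ_M·e^{((a−1)/2) f}·h⁺ − (m/2)·f'·h⁻ − i^{2m+3}·λ_Q·e^{(a/2) f}·h⁻ on I, where i = √−1. Then the function |h⁺|² − |h⁻|² satisfies (|h⁺|² − |h⁻|²)'(t) = −m·f'(t)·(|h⁺(t)|² − |h⁻(t)|²) for all t ∈ I; consequently, if h⁺(0) = h⁻(0), then |h⁺(t)| = |h⁻(t)| for all t ∈ I. -/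
/-- The conservation argument in the proof of Proposition 7.1: if `(h⁺, h⁻)` solves the
displayed linear system on an open interval `I` containing `0`, then
`(|h⁺|² − |h⁻|²)' = −m f' (|h⁺|² − |h⁻|²)` on `I`; consequently `h⁺ 0 = h⁻ 0` implies
`|h⁺ t| = |h⁻ t|` for all `t ∈ I`. -/
theorem stmt_7 (m : ℕ) (a lamQ lamM : ℝ) (I : Set ℝ) (hI : IsOpen I)
    (hconn : I.OrdConnected) (h0I : (0 : ℝ) ∈ I)
    (f f' : ℝ → ℝ) (hf : ∀ t ∈ I, HasDerivAt f (f' t) t)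
    (hp hm : ℝ → ℂ)
    (hhp : ∀ t ∈ I, HasDerivAt hp
      (-(((m : ℝ) / 2 : ℝ) : ℂ) * ((f' t : ℝ) : ℂ) * hp t
        + Complex.I ^ (2 * m + 3) * (lamQ : ℂ) * ((Real.exp ((a / 2) * f t) : ℝ) : ℂ) * hp t
        - Complex.I ^ (2 * m + 3) * (lamM : ℂ) *
            ((Real.exp (((a - 1) / 2) * f t) : ℝ) : ℂ) * hm t) t)
    (hhm : ∀ t ∈ I, HasDerivAt hm
      (Complex.I ^ (2 * m + 3) * (lamM : ℂ) *
          ((Real.exp (((a - 1) / 2) * f t) : ℝ) : ℂ) * hp t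
        - (((m : ℝ) / 2 : ℝ) : ℂ) * ((f' t : ℝ) : ℂ) * hm t
        - Complex.I ^ (2 * m + 3) * (lamQ : ℂ) *
            ((Real.exp ((a / 2) * f t) : ℝ) : ℂ) * hm t) t) :
    (∀ t ∈ I, HasDerivAt (fun s => ‖hp s‖ ^ 2 - ‖hm s‖ ^ 2)
      (-(m : ℝ) * f' t * (‖hp t‖ ^ 2 - ‖hm t‖ ^ 2)) t) ∧
    (hp 0 = hm 0 → ∀ t ∈ I, ‖hp t‖ = ‖hm t‖) := by
  obtain ⟨ε, hε⟩ : ∃ ε : ℝ, Complex.I ^ (2 * m + 3) = (ε : ℂ) * (-Complex.I) := by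
    refine ⟨(-1) ^ m, ?_⟩
    have h3 : Complex.I ^ 3 = -Complex.I := by
      simp [pow_succ, Complex.I_mul_I]
    rw [pow_add, pow_mul, Complex.I_sq, h3]
    push_cast
    ring
  have part1 : ∀ t ∈ I, HasDerivAt (fun s => ‖hp s‖ ^ 2 - ‖hm s‖ ^ 2)
      (-(m : ℝ) * f' t * (‖hp t‖ ^ 2 - ‖hm t‖ ^ 2)) t := by
    intro t ht
    have hdP := hhp t ht
    have hdM := hhm t ht
    have hPre : HasDerivAt (fun s => (hp s).re)
        (-(((m : ℝ) / 2 : ℝ) : ℂ) * ((f' t : ℝ) : ℂ) * hp t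
          + Complex.I ^ (2 * m + 3) * (lamQ : ℂ) * ((Real.exp ((a / 2) * f t) : ℝ) : ℂ) * hp t
          - Complex.I ^ (2 * m + 3) * (lamM : ℂ) *
              ((Real.exp (((a - 1) / 2) * f t) : ℝ) : ℂ) * hm t).re t := by
      exact Complex.reCLM.hasFDerivAt.comp_hasDerivAt t hdP
    have hPim : HasDerivAt (fun s => (hp s).im)
        (-(((m : ℝ) / 2 : ℝ) : ℂ) * ((f' t : ℝ) : ℂ) * hp t
          + Complex.I ^ (2 * m + 3) * (lamQ : ℂ) * ((Real.exp ((a / 2) * f t) : ℝ) : ℂ) * hp t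
          - Complex.I ^ (2 * m + 3) * (lamM : ℂ) *
              ((Real.exp (((a - 1) / 2) * f t) : ℝ) : ℂ) * hm t).im t := by
      exact Complex.imCLM.hasFDerivAt.comp_hasDerivAt t hdP
    have hMre : HasDerivAt (fun s => (hm s).re)
        (Complex.I ^ (2 * m + 3) * (lamM : ℂ) *
            ((Real.exp (((a - 1) / 2) * f t) : ℝ) : ℂ) * hp t
          - (((m : ℝ) / 2 : ℝ) : ℂ) * ((f' t : ℝ) : ℂ) * hm t
          - Complex.I ^ (2 * m + 3) * (lamQ : ℂ) *
              ((Real.exp ((a / 2) * f t) : ℝ) : ℂ) * hm t).re t := by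
      exact Complex.reCLM.hasFDerivAt.comp_hasDerivAt t hdM
    have hMim : HasDerivAt (fun s => (hm s).im)
        (Complex.I ^ (2 * m + 3) * (lamM : ℂ) *
            ((Real.exp (((a - 1) / 2) * f t) : ℝ) : ℂ) * hp t
          - (((m : ℝ) / 2 : ℝ) : ℂ) * ((f' t : ℝ) : ℂ) * hm t
          - Complex.I ^ (2 * m + 3) * (lamQ : ℂ) *
              ((Real.exp ((a / 2) * f t) : ℝ) : ℂ) * hm t).im t := by
      exact Complex.imCLM.hasFDerivAt.comp_hasDerivAt t hdM
    have key := ((hPre.pow 2).add (hPim.pow 2)).sub ((hMre.pow 2).add (hMim.pow 2))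
    have hfun : (fun s => ‖hp s‖ ^ 2 - ‖hm s‖ ^ 2)
        = (fun s => ((hp s).re ^ 2 + (hp s).im ^ 2) - ((hm s).re ^ 2 + (hm s).im ^ 2)) := by
      funext s
      rw [Complex.sq_norm, Complex.sq_norm, Complex.normSq_apply, Complex.normSq_apply]
      ring
    rw [hfun]
    refine key.congr_deriv ?_
    rw [Complex.sq_norm, Complex.sq_norm, Complex.normSq_apply, Complex.normSq_apply]
    simp only [hε, Complex.mul_re, Complex.mul_im, Complex.add_re, Complex.add_im,
      Complex.sub_re, Complex.sub_im, Complex.neg_re, Complex.neg_im, Complex.I_re,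
      Complex.I_im, Complex.ofReal_re, Complex.ofReal_im]
    push_cast
    ring
  refine ⟨part1, fun h00 t ht => ?_⟩
  set F : ℝ → ℝ := fun s => ‖hp s‖ ^ 2 - ‖hm s‖ ^ 2 with hF
  set G : ℝ → ℝ := fun s => F s * Real.exp ((m : ℝ) * f s) with hG
  have hGd : ∀ s ∈ I, HasDerivAt G 0 s := by
    intro s hs
    have h1 := (part1 s hs).mul (((hf s hs).const_mul (m : ℝ)).exp)
    refine h1.congr_deriv ?_
    ring
  have hconv : Convex ℝ I := convex_iff_ordConnected.mpr hconn
  have hGconst : G t = G 0 := by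
    apply hconv.is_const_of_fderivWithin_eq_zero
      (fun x hx => ((hGd x hx).differentiableAt).differentiableWithinAt)
      (fun x hx => ?_) ht h0I
    rw [fderivWithin_of_isOpen hI hx]
    have := (hGd x hx).hasFDerivAt.fderiv
    rw [this]
    ext
    simp
  have hF0 : F 0 = 0 := by simp [hF, h00]
  have hFt : F t = 0 := by
    have hexp : Real.exp ((m : ℝ) * f t) ≠ 0 := Real.exp_ne_zero _
    have hGt0 : G t = 0 := by
      rw [hGconst]
      simp [hG, hF0]
    have : F t * Real.exp ((m : ℝ) * f t) = 0 := hGt0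
    exact (mul_eq_zero.mp this).resolve_right hexp
  have h1 : ‖hp t‖ ^ 2 = ‖hm t‖ ^ 2 := by
    have : ‖hp t‖ ^ 2 - ‖hm t‖ ^ 2 = 0 := hFt
    linarith
  have := norm_nonneg (hp t)
  have := norm_nonneg (hm t)
  nlinarith
end
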